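/- If f ∈ BV¹ then for every integer n ≥ 1, n · sup_{x∈[−1,1]} |B_n(f,x) − f(x)| ≤ T_{f'}[−1,1]/2 + max { sup_{x∈(−1,1)} |O(f,x)|, sup_{x∈(−1,1)} |E(f,x)| }. -/

import Mathlib

open Filter Set MeasureTheory

noncomputable section

/-- Equally spaced nodes `x_{k,n} = 2k/n - 1`. -/
def node (n k : ℕ) : ℝ := 2 * k / n - 1

/-- `x` is one of the nodes `x_{0,n}, …, x_{n,n}`. -/
def isNode (n : ℕ) (x : ℝ) : Prop := ∃ k ≤ n, x = node n k

/-- Denominator of Berrut's interpolant. -/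
def Dden (n : ℕ) (x : ℝ) : ℝ :=
  ∑ k ∈ Finset.range (n + 1), (-1 : ℝ) ^ k / (x - node n k)

/-- Numerator of Berrut's interpolant. -/
def Nnum (f : ℝ → ℝ) (n : ℕ) (x : ℝ) : ℝ :=
  ∑ k ∈ Finset.range (n + 1), (-1 : ℝ) ^ k * f (node n k) / (x - node n k)

open Classical in
/-- Berrut's barycentric interpolant. -/
def berrut (f : ℝ → ℝ) (n : ℕ) (x : ℝ) : ℝ :=
  if isNode n x then f x else Nnum f n x / Dden n x

/-- The odd bias function `O(f,x)`. -/
def Ofun (f : ℝ → ℝ) (x : ℝ) : ℝ :=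
  (f x - f 1) / (2 * (x - 1)) - (f x - f (-1)) / (2 * (x + 1))

/-- The even bias function `E(f,x)`. -/
def Efun (f : ℝ → ℝ) (x : ℝ) : ℝ :=
  (f 1 - f x) / (2 * (x - 1)) + (f (-1) - f x) / (2 * (x + 1))

/-- `f` is differentiable on `[-1,1]` with absolutely continuous derivative. -/
def AC1 (f : ℝ → ℝ) : Prop :=
  ∃ f' : ℝ → ℝ,
    (∀ x ∈ Set.Icc (-1 : ℝ) 1, HasDerivWithinAt f (f' x) (Set.Icc (-1 : ℝ) 1) x) ∧
    ∃ g : ℝ → ℝ, IntervalIntegrable g volume (-1) 1 ∧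
      ∀ x ∈ Set.Icc (-1 : ℝ) 1, f' x = f' (-1) + ∫ t in (-1 : ℝ)..x, g t

/-- `x` is regular for the sequence `n j`: eventually never a node. -/
def Regular (n : ℕ → ℕ) (x : ℝ) : Prop := ∃ j₀, ∀ j ≥ j₀, ¬ isNode (n j) x

/-- The function `A(x) = Σ (-1)^k (4k+2)/((2k+1)^2 - x)`. -/
def Afun (x : ℝ) : ℝ := ∑' k : ℕ, (-1 : ℝ) ^ k * (4 * k + 2) / ((2 * k + 1) ^ 2 - x)

/-- `ι_n(x) = ⌊n(x+1)/2⌋`. -/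
def iota (n : ℕ) (x : ℝ) : ℤ := ⌊(n : ℝ) * (x + 1) / 2⌋

/-- `ρ_n(x) = n(x - x_{ι_n(x),n}) - 1 = n(x+1) - 2 ι_n(x) - 1`. -/
def rho (n : ℕ) (x : ℝ) : ℝ := (n : ℝ) * (x + 1) - 2 * (iota n x : ℝ) - 1

open Classical in
/-- The de-biased numerator `Δ_n(f,x)`. -/
def Delta (f : ℝ → ℝ) (n : ℕ) (x : ℝ) : ℝ :=
  if isNode n x then 0 else
    (f (-1) - f x) / (2 * (x + 1)) + (-1 : ℝ) ^ n * (f 1 - f x) / (2 * (x - 1)) +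
      (1 / (n : ℝ)) * ∑ k ∈ Finset.Ioo 0 n, (-1 : ℝ) ^ k * (f (node n k) - f x) / (x - node n k)

end


lemma alt_shift (M : ℕ) (c : ℕ → ℝ) :
    ∑ m ∈ Finset.range (M+1), (-1:ℝ)^m * c m
      = c 0 - ∑ m ∈ Finset.range M, (-1:ℝ)^m * c (m+1) := by
  rw [Finset.sum_range_succ']
  simp only [pow_zero, one_mul, pow_succ]
  rw [sub_eq_add_neg, add_comm, ← Finset.sum_neg_distrib]
  congr 1
  apply Finset.sum_congr rfl
  intro m _
  ring

lemma altsum_bounds (M : ℕ) : ∀ c : ℕ → ℝ, (∀ m, c (m+1) ≤ c m) → (∀ m, 0 ≤ c m) →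
    0 ≤ ∑ m ∈ Finset.range M, (-1:ℝ)^m * c m ∧
      ∑ m ∈ Finset.range M, (-1:ℝ)^m * c m ≤ c 0 := by
  induction M with
  | zero => intro c h1 h2; simpa using h2 0
  | succ M ih =>
    intro c h1 h2
    obtain ⟨ha, hb⟩ := ih (fun m => c (m+1)) (fun m => h1 (m+1)) (fun m => h2 (m+1))
    rw [alt_shift]
    have h10 := h1 0
    exact ⟨by linarith, by linarith⟩

lemma altsum_ge (M : ℕ) (hM : 1 ≤ M) (c : ℕ → ℝ) (h1 : ∀ m, c (m+1) ≤ c m)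
    (h2 : ∀ m, 0 ≤ c m) :
    c 0 - c 1 ≤ ∑ m ∈ Finset.range M, (-1:ℝ)^m * c m := by
  obtain ⟨M', rfl⟩ := Nat.exists_eq_add_of_le hM
  rw [add_comm, alt_shift]
  obtain ⟨ha, hb⟩ := altsum_bounds M' (fun m => c (m+1)) (fun m => h1 (m+1)) (fun m => h2 (m+1))
  linarith

lemma node_zero (n : ℕ) : node n 0 = -1 := by simp [node]

lemma node_last {n : ℕ} (hn : 1 ≤ n) : node n n = 1 := by
  have : (n:ℝ) ≠ 0 := by positivity
  rw [node, mul_div_assoc, div_self this]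
  norm_num

lemma node_lt_node {n k l : ℕ} (hn : 1 ≤ n) (h : k < l) : node n k < node n l := by
  have hn' : (0:ℝ) < n := by positivity
  have h' : (k:ℝ) < l := by exact_mod_cast h
  unfold node
  have : 2*(k:ℝ)/n < 2*l/n := by
    apply div_lt_div_of_pos_right ?_ hn' <;> linarith
  linarith

lemma node_mem {n k : ℕ} (hn : 1 ≤ n) (hk : k ≤ n) : node n k ∈ Icc (-1:ℝ) 1 := by
  have hn' : (0:ℝ) < n := by positivity
  have hk' : (k:ℝ) ≤ n := by exact_mod_cast hk
  constructor
  · unfold node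
    have : 0 ≤ 2*(k:ℝ)/n := by positivity
    linarith
  · unfold node
    have : 2*(k:ℝ)/n ≤ 2 := by
      rw [div_le_iff₀ hn']; linarith
    linarith

lemma dden_lower {n : ℕ} (hn : 1 ≤ n) {x : ℝ} (hx1 : -1 < x) (hx2 : x < 1)
    (hnode : ∀ k ≤ n, x ≠ node n k) : (n:ℝ) ≤ |Dden n x| := by
  have hn' : (0:ℝ) < n := by positivity
  set t : ℝ := (n:ℝ) * (x + 1) / 2 with ht_def
  have ht0 : 0 < t := by
    have : 0 < x + 1 := by linarith
    positivity
  have htn : t < n := by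
    rw [ht_def, div_lt_iff₀ (by norm_num : (0:ℝ) < 2)]
    nlinarith
  have hxk : ∀ k : ℕ, x - node n k = 2 * (t - k) / n := by
    intro k
    rw [node, ht_def]
    field_simp
    ring
  have htne : ∀ k : ℕ, k ≤ n → t ≠ (k:ℝ) := by
    intro k hk he
    apply hnode k hk
    have := hxk k
    rw [he, sub_self, mul_zero, zero_div, sub_eq_zero] at this
    exact this
  set i : ℕ := ⌊t⌋₊ with hi_def
  have hi1 : (i:ℝ) ≤ t := Nat.floor_le ht0.le
  have hi2 : t < (i:ℝ) + 1 := Nat.lt_floor_add_one t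
  have hin : i < n := by
    by_contra h
    push_neg at h
    have : (n:ℝ) ≤ i := by exact_mod_cast h
    linarith
  have hi1' : (i:ℝ) < t := lt_of_le_of_ne hi1 (fun h => htne i hin.le h.symm)
  -- rewrite Dden
  have hDden : Dden n x = (n/2) * ∑ k ∈ Finset.range (n+1), (-1:ℝ)^k / (t - k) := by
    rw [Dden, Finset.mul_sum]
    apply Finset.sum_congr rfl
    intro k hk
    rw [hxk k]
    have hne : t - (k:ℝ) ≠ 0 := sub_ne_zero.mpr (htne k (Nat.lt_succ_iff.mp (Finset.mem_range.mp hk)))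
    field_simp
  set S : ℝ := ∑ k ∈ Finset.range (n+1), (-1:ℝ)^k / (t - k) with hS_def
  -- split
  set a : ℝ := t - i with ha_def
  set b : ℝ := (i:ℝ) + 1 - t with hb_def
  have ha0 : 0 < a := by simp only [ha_def]; linarith
  have ha1 : a < 1 := by simp only [ha_def]; linarith
  have hb0 : 0 < b := by simp only [hb_def]; linarith
  have hab : a + b = 1 := by simp only [ha_def, hb_def]; ring
  -- left part
  set u : ℕ → ℝ := fun m => 1 / (t - ((i - m : ℕ):ℝ)) with hu_def
  have hu_pos_den : ∀ m, 0 < t - ((i - m : ℕ):ℝ) := by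
    intro m
    have : ((i - m : ℕ):ℝ) ≤ i := by exact_mod_cast Nat.sub_le i m
    linarith
  have hu_anti : ∀ m, u (m+1) ≤ u m := by
    intro m
    apply one_div_le_one_div_of_le (hu_pos_den m)
    have : ((i - (m+1) : ℕ):ℝ) ≤ ((i - m : ℕ):ℝ) := by
      exact_mod_cast Nat.sub_le_sub_left (Nat.le_succ m) i
    linarith
  have hu_nonneg : ∀ m, 0 ≤ u m := fun m => le_of_lt (by
    rw [hu_def]; exact one_div_pos.mpr (hu_pos_den m))
  -- right part
  set w : ℕ → ℝ := fun m => 1 / (((min (i+1+m) n : ℕ) : ℝ) - t) with hw_def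
  have hw_pos_den : ∀ m, 0 < ((min (i+1+m) n : ℕ):ℝ) - t := by
    intro m
    have h1 : i + 1 ≤ min (i+1+m) n := le_min (Nat.le_add_right _ _) hin
    have : ((i:ℝ) + 1) ≤ ((min (i+1+m) n : ℕ):ℝ) := by exact_mod_cast h1
    linarith
  have hw_anti : ∀ m, w (m+1) ≤ w m := by
    intro m
    simp only [hw_def]
    apply one_div_le_one_div_of_le (hw_pos_den m)
    have : ((min (i+1+m) n : ℕ):ℝ) ≤ ((min (i+1+(m+1)) n : ℕ):ℝ) := by
      exact_mod_cast min_le_min (by omega) (le_refl n)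
    linarith
  have hw_nonneg : ∀ m, 0 ≤ w m := fun m => le_of_lt (by
    rw [hw_def]; exact one_div_pos.mpr (hw_pos_den m))
  -- split the sum
  have hsplit : S = (∑ k ∈ Finset.range (i+1), (-1:ℝ)^k / (t - k))
      + ∑ k ∈ Finset.Ico (i+1) (n+1), (-1:ℝ)^k / (t - k) := by
    rw [hS_def, Finset.range_eq_Ico, ← Finset.sum_Ico_consecutive _ (Nat.zero_le (i+1)) (by omega),
      ← Finset.range_eq_Ico]
  -- left sum reindex
  have hleft : (∑ k ∈ Finset.range (i+1), (-1:ℝ)^k / (t - k))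
      = (-1:ℝ)^i * ∑ m ∈ Finset.range (i+1), (-1:ℝ)^m * u m := by
    rw [← Finset.sum_range_reflect (fun k => (-1:ℝ)^k / (t - k)) (i+1), Finset.mul_sum]
    apply Finset.sum_congr rfl
    intro m hm
    have hm' : m ≤ i := Nat.lt_succ_iff.mp (Finset.mem_range.mp hm)
    have hsign : (-1:ℝ)^(i-m) * (-1:ℝ)^m = (-1:ℝ)^i := by
      rw [← pow_add, Nat.sub_add_cancel hm']
    have h2 : (-1:ℝ)^(i-m) = (-1:ℝ)^i * (-1:ℝ)^m := by
      have hsq : (-1:ℝ)^m * (-1:ℝ)^m = 1 := by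
        rw [← pow_add, ← two_mul, pow_mul]; norm_num
      calc (-1:ℝ)^(i-m) = (-1:ℝ)^(i-m) * ((-1:ℝ)^m * (-1:ℝ)^m) := by rw [hsq, mul_one]
        _ = ((-1:ℝ)^(i-m) * (-1:ℝ)^m) * (-1:ℝ)^m := by ring
        _ = (-1:ℝ)^i * (-1:ℝ)^m := by rw [hsign]
    have : i + 1 - 1 - m = i - m := by omega
    rw [this, h2, hu_def]
    simp only
    rw [div_eq_mul_one_div]
    ring
  -- right sum reindex
  have hIco : ∀ k ∈ Finset.Ico (i+1) (n+1), (-1:ℝ)^k / (t - k)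
      = (-1:ℝ)^i * ((-1:ℝ)^(k - (i+1)) * w (k - (i+1))) := by
    intro k hk
    obtain ⟨hk1, hk2⟩ := Finset.mem_Ico.mp hk
    have hmin : min (i+1+(k-(i+1))) n = k := by omega
    have hsign : (-1:ℝ)^k = (-1:ℝ)^i * (-1:ℝ)^(k-(i+1)) * (-1) := by
      have h1 : i + (k - (i+1)) + 1 = k := by omega
      calc (-1:ℝ)^k = (-1:ℝ)^(i + (k - (i+1)) + 1) := by rw [h1]
        _ = (-1:ℝ)^i * (-1:ℝ)^(k-(i+1)) * (-1) := by rw [pow_succ, pow_add]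
    rw [hw_def]
    simp only [hmin]
    rw [hsign, show t - (k:ℝ) = -((k:ℝ) - t) by ring, div_neg, div_eq_mul_one_div]
    ring
  have hright : (∑ k ∈ Finset.Ico (i+1) (n+1), (-1:ℝ)^k / (t - k))
      = (-1:ℝ)^i * ∑ m ∈ Finset.range (n - i), (-1:ℝ)^m * w m := by
    rw [Finset.sum_congr rfl hIco, ← Finset.mul_sum]
    congr 1
    rw [Finset.sum_Ico_eq_sum_range]
    have : n + 1 - (i + 1) = n - i := by omega
    rw [this]
    apply Finset.sum_congr rfl
    intro m _
    have hm : i + 1 + m - (i + 1) = m := by omega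
    rw [hm]
  -- bounds
  have hla : 1/a - 1/(a+1) ≤ ∑ m ∈ Finset.range (i+1), (-1:ℝ)^m * u m := by
    have hu0 : u 0 = 1/a := by
      rw [hu_def]; simp only [Nat.sub_zero, ha_def]
    rcases Nat.eq_zero_or_pos i with hi0 | hip
    · rw [hi0]
      simp only [zero_add, Finset.range_one, Finset.sum_singleton, pow_zero, one_mul, hu0]
      have : 0 < 1/(a+1) := by positivity
      linarith
    · have hu1 : u 1 = 1/(a+1) := by
        rw [hu_def]
        simp only
        congr 1
        have : ((i - 1 : ℕ):ℝ) = (i:ℝ) - 1 := by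
          have : (1:ℕ) ≤ i := hip
          push_cast [Nat.cast_sub this]
          ring
        rw [this, ha_def]
        ring
      have := altsum_ge (i+1) (by omega) u hu_anti hu_nonneg
      rw [hu0, hu1] at this
      exact this
  have hra : 1/b - 1/(b+1) ≤ ∑ m ∈ Finset.range (n - i), (-1:ℝ)^m * w m := by
    have hw0 : w 0 = 1/b := by
      rw [hw_def]
      simp only [Nat.add_zero]
      rw [min_eq_left (by omega : i + 1 ≤ n)]
      rw [hb_def]
      norm_num
    rcases eq_or_lt_of_le (show 1 ≤ n - i by omega) with h1 | h2
    · rw [← h1]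
      simp only [Finset.range_one, Finset.sum_singleton, pow_zero, one_mul, hw0]
      have : 0 < 1/(b+1) := by positivity
      linarith
    · have hw1 : w 1 = 1/(b+1) := by
        rw [hw_def]
        simp only
        rw [min_eq_left (by omega : i + 1 + 1 ≤ n)]
        congr 1
        push_cast
        rw [hb_def]
        ring
      have := altsum_ge (n-i) (by omega) w hw_anti hw_nonneg
      rw [hw0, hw1] at this
      exact this
  -- combine
  have hcomb : (-1:ℝ)^i * S = (∑ m ∈ Finset.range (i+1), (-1:ℝ)^m * u m)
      + ∑ m ∈ Finset.range (n - i), (-1:ℝ)^m * w m := by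
    have hsq : (-1:ℝ)^i * (-1:ℝ)^i = 1 := by
      rw [← pow_add, ← two_mul, pow_mul]; norm_num
    rw [hsplit, hleft, hright]
    calc (-1:ℝ)^i * ((-1:ℝ)^i * (∑ m ∈ Finset.range (i+1), (-1:ℝ)^m * u m)
          + (-1:ℝ)^i * ∑ m ∈ Finset.range (n - i), (-1:ℝ)^m * w m)
        = ((-1:ℝ)^i * (-1:ℝ)^i) * ((∑ m ∈ Finset.range (i+1), (-1:ℝ)^m * u m)
          + ∑ m ∈ Finset.range (n - i), (-1:ℝ)^m * w m) := by ring
      _ = _ := by rw [hsq, one_mul]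
  have hkey : 2 ≤ (-1:ℝ)^i * S := by
    rw [hcomb]
    have h2 : 1/a - 1/(a+1) + (1/b - 1/(b+1)) ≥ 2 := by
      have e1 : 1/a - 1/(a+1) = 1/(a*(a+1)) := by
        field_simp
        ring
      have e2 : 1/b - 1/(b+1) = 1/(b*(b+1)) := by
        field_simp
        ring
      rw [e1, e2, ge_iff_le, div_add_div _ _ (by positivity) (by positivity),
        le_div_iff₀ (by positivity)]
      nlinarith [sq_nonneg (a - b), sq_nonneg (a*b), mul_pos ha0 hb0]
    linarith
  have hS2 : 2 ≤ |S| := by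
    calc (2:ℝ) ≤ (-1:ℝ)^i * S := hkey
      _ ≤ |(-1:ℝ)^i * S| := le_abs_self _
      _ = |S| := by rw [abs_mul, abs_pow, abs_neg, abs_one, one_pow, one_mul]
  rw [hDden, abs_mul]
  have : |(n:ℝ)/2| = n/2 := abs_of_pos (by positivity)
  rw [this]
  calc (n:ℝ) = (n/2) * 2 := by ring
    _ ≤ (n/2) * |S| := by
        apply mul_le_mul_of_nonneg_left hS2 (by positivity)


lemma monoII {φ : ℝ → ℝ} (hφ : MonotoneOn φ (Icc (-1:ℝ) 1)) {u v : ℝ}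
    (hu : u ∈ Icc (-1:ℝ) 1) (hv : v ∈ Icc (-1:ℝ) 1) : IntervalIntegrable φ volume u v :=
  (hφ.mono (uIcc_subset_Icc hu hv)).intervalIntegrable

lemma int_le_right {φ : ℝ → ℝ} (hφ : MonotoneOn φ (Icc (-1:ℝ) 1)) {u v : ℝ}
    (hu : u ∈ Icc (-1:ℝ) 1) (hv : v ∈ Icc (-1:ℝ) 1) (huv : u ≤ v) :
    ∫ s in u..v, φ s ≤ φ v * (v - u) := by
  have : ∫ s in u..v, φ s ≤ ∫ _s in u..v, φ v := by
    apply intervalIntegral.integral_mono_on huv (monoII hφ hu hv) intervalIntegrable_const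
    intro t ht
    exact hφ ⟨le_trans hu.1 ht.1, le_trans ht.2 hv.2⟩ hv ht.2
  simpa [mul_comm] using this

lemma int_ge_left {φ : ℝ → ℝ} (hφ : MonotoneOn φ (Icc (-1:ℝ) 1)) {u v : ℝ}
    (hu : u ∈ Icc (-1:ℝ) 1) (hv : v ∈ Icc (-1:ℝ) 1) (huv : u ≤ v) :
    φ u * (v - u) ≤ ∫ s in u..v, φ s := by
  have : ∫ _s in u..v, φ u ≤ ∫ s in u..v, φ s := by
    apply intervalIntegral.integral_mono_on huv intervalIntegrable_const (monoII hφ hu hv)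
    intro t ht
    exact hφ hu ⟨le_trans hu.1 ht.1, le_trans ht.2 hv.2⟩ ht.1
  simpa [mul_comm] using this

lemma avg_mono {φ : ℝ → ℝ} (hφ : MonotoneOn φ (Icc (-1:ℝ) 1)) {u v x : ℝ}
    (hu : u ∈ Icc (-1:ℝ) 1) (hv : v ∈ Icc (-1:ℝ) 1) (hx : x ∈ Icc (-1:ℝ) 1)
    (huv : u < v) (hux : u ≠ x) (hvx : v ≠ x) :
    (∫ s in u..x, φ s) / (x - u) ≤ (∫ s in v..x, φ s) / (x - v) := by
  rcases lt_or_gt_of_ne hvx with hvltx | hxltv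
  · -- u < v < x
    have huxlt : u < x := lt_trans huv hvltx
    rw [div_le_div_iff₀ (by linarith) (by linarith)]
    have hsplit : (∫ s in u..v, φ s) + (∫ s in v..x, φ s) = ∫ s in u..x, φ s :=
      intervalIntegral.integral_add_adjacent_intervals (monoII hφ hu hv) (monoII hφ hv hx)
    have h1 : ∫ s in u..v, φ s ≤ φ v * (v - u) := int_le_right hφ hu hv huv.le
    have h2 : φ v * (x - v) ≤ ∫ s in v..x, φ s := int_ge_left hφ hv hx hvltx.le
    nlinarith [mul_le_mul_of_nonneg_right h1 (by linarith : (0:ℝ) ≤ x - v),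
      mul_le_mul_of_nonneg_right h2 (by linarith : (0:ℝ) ≤ v - u)]
  · rcases lt_or_gt_of_ne hux with hultx | hxltu
    · -- u < x < v
      have e2 : (∫ s in v..x, φ s) / (x - v) = (∫ s in x..v, φ s) / (v - x) := by
        rw [intervalIntegral.integral_symm, show x - v = -(v - x) by ring, neg_div_neg_eq]
      rw [e2]
      have hA : (∫ s in u..x, φ s) / (x - u) ≤ φ x := by
        rw [div_le_iff₀ (by linarith)]
        exact int_le_right hφ hu hx hultx.le
      have hB : φ x ≤ (∫ s in x..v, φ s) / (v - x) := by
        rw [le_div_iff₀ (by linarith)]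
        exact int_ge_left hφ hx hv hxltv.le
      linarith
    · -- x < u < v
      have e1 : (∫ s in u..x, φ s) / (x - u) = (∫ s in x..u, φ s) / (u - x) := by
        rw [intervalIntegral.integral_symm, show x - u = -(u - x) by ring, neg_div_neg_eq]
      have e2 : (∫ s in v..x, φ s) / (x - v) = (∫ s in x..v, φ s) / (v - x) := by
        rw [intervalIntegral.integral_symm, show x - v = -(v - x) by ring, neg_div_neg_eq]
      rw [e1, e2, div_le_div_iff₀ (by linarith) (by linarith)]
      have hsplit : (∫ s in x..u, φ s) + (∫ s in u..v, φ s) = ∫ s in x..v, φ s :=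
        intervalIntegral.integral_add_adjacent_intervals (monoII hφ hx hu) (monoII hφ hu hv)
      have h1 : ∫ s in x..u, φ s ≤ φ u * (u - x) := int_le_right hφ hx hu hxltu.le
      have h2 : φ u * (v - u) ≤ ∫ s in u..v, φ s := int_ge_left hφ hu hv huv.le
      nlinarith [mul_le_mul_of_nonneg_right h1 (by linarith : (0:ℝ) ≤ v - u),
        mul_le_mul_of_nonneg_right h2 (by linarith : (0:ℝ) ≤ u - x)]

theorem statement10 (f f' : ℝ → ℝ)
    (hderiv : ∀ x ∈ Set.Icc (-1 : ℝ) 1, HasDerivWithinAt f (f' x) (Set.Icc (-1 : ℝ) 1) x)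
    (hbv : BoundedVariationOn f' (Set.Icc (-1 : ℝ) 1)) (n : ℕ) (hn : 1 ≤ n) :
    (n : ℝ) * ⨆ x : Set.Icc (-1 : ℝ) 1, |berrut f n (x : ℝ) - f (x : ℝ)| ≤
      (eVariationOn f' (Set.Icc (-1 : ℝ) 1)).toReal / 2 +
        max (⨆ x : Set.Ioo (-1 : ℝ) 1, |Ofun f (x : ℝ)|)
            (⨆ x : Set.Ioo (-1 : ℝ) 1, |Efun f (x : ℝ)|) := by
  classical
  set T : ℝ := (eVariationOn f' (Set.Icc (-1:ℝ) 1)).toReal with hT_def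
  set M : ℝ := max (⨆ x : Set.Ioo (-1:ℝ) 1, |Ofun f (x : ℝ)|)
      (⨆ x : Set.Ioo (-1:ℝ) 1, |Efun f (x : ℝ)|) with hM_def
  have hT0 : 0 ≤ T := ENNReal.toReal_nonneg
  have hM0 : 0 ≤ M := le_trans (Real.iSup_nonneg fun y => abs_nonneg _) (le_max_left _ _)
  have hn' : (0:ℝ) < n := by positivity
  have hm1 : (-1:ℝ) ∈ Icc (-1:ℝ) 1 := by constructor <;> norm_num
  have hp1 : (1:ℝ) ∈ Icc (-1:ℝ) 1 := by constructor <;> norm_num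
  have lbv : LocallyBoundedVariationOn f' (Icc (-1:ℝ) 1) := hbv.locallyBoundedVariationOn
  set vft : ℝ → ℝ := variationOnFromTo f' (Icc (-1:ℝ) 1) (-1) with hvft_def
  have hvdiff : ∀ u ∈ Icc (-1:ℝ) 1, ∀ v ∈ Icc (-1:ℝ) 1, u ≤ v →
      |f' v - f' u| ≤ vft v - vft u := by
    intro u hu v hv huv
    have hadd := variationOnFromTo.add lbv hm1 hu hv
    have h1 : variationOnFromTo f' (Icc (-1:ℝ) 1) u v
        = (eVariationOn f' (Icc (-1:ℝ) 1 ∩ Icc u v)).toReal :=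
      variationOnFromTo.eq_of_le _ _ huv
    have h2 : |f' v - f' u| ≤ (eVariationOn f' (Icc (-1:ℝ) 1 ∩ Icc u v)).toReal := by
      rw [← Real.dist_eq]
      exact (hbv.mono inter_subset_left).dist_le ⟨hv, huv, le_refl v⟩ ⟨hu, le_refl u, huv⟩
    simp only [hvft_def]
    linarith
  set P : ℝ → ℝ := fun s => (vft s + f' s)/2 with hP_def
  set Q : ℝ → ℝ := fun s => (vft s - f' s)/2 with hQ_def
  have hPm : MonotoneOn P (Icc (-1:ℝ) 1) := by
    intro u hu v hv huv
    have h := abs_le.mp (hvdiff u hu v hv huv)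
    simp only [hP_def]
    try dsimp only
    linarith [h.1]
  have hQm : MonotoneOn Q (Icc (-1:ℝ) 1) := by
    intro u hu v hv huv
    have h := abs_le.mp (hvdiff u hu v hv huv)
    simp only [hQ_def]
    try dsimp only
    linarith [h.2]
  have hfPQ : ∀ s, f' s = P s - Q s := by
    intro s; simp only [hP_def, hQ_def]; ring
  have hf'int : ∀ u ∈ Icc (-1:ℝ) 1, ∀ v ∈ Icc (-1:ℝ) 1,
      IntervalIntegrable f' volume u v := by
    intro u hu v hv
    have h := (monoII hPm hu hv).sub (monoII hQm hu hv)
    have he : (fun s => P s - Q s) = f' := by funext s; rw [hfPQ s]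
    rwa [he] at h
  have hcont : ContinuousOn f (Icc (-1:ℝ) 1) := fun s hs => (hderiv s hs).continuousWithinAt
  have ftc : ∀ u ∈ Icc (-1:ℝ) 1, ∀ v ∈ Icc (-1:ℝ) 1, (∫ s in u..v, f' s) = f v - f u := by
    have base : ∀ u ∈ Icc (-1:ℝ) 1, ∀ v ∈ Icc (-1:ℝ) 1, u ≤ v →
        (∫ s in u..v, f' s) = f v - f u := by
      intro u hu v hv huv
      apply intervalIntegral.integral_eq_sub_of_hasDeriv_right_of_le huv
        (hcont.mono (Icc_subset_Icc hu.1 hv.2)) ?_ (hf'int u hu v hv)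
      intro s hs
      have hsI : s ∈ Ioo (-1:ℝ) 1 := ⟨lt_of_le_of_lt hu.1 hs.1, lt_of_lt_of_le hs.2 hv.2⟩
      exact ((hderiv s (Ioo_subset_Icc_self hsI)).hasDerivAt
        (Icc_mem_nhds hsI.1 hsI.2)).hasDerivWithinAt
    intro u hu v hv
    rcases le_total u v with h | h
    · exact base u hu v hv h
    · rw [intervalIntegral.integral_symm, base v hv u hu h]; ring
  set K : ℝ := |f' (-1)| + T with hK_def
  have hquot : ∀ u ∈ Icc (-1:ℝ) 1, ∀ v ∈ Icc (-1:ℝ) 1, |f u - f v| ≤ K * |u - v| := by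
    intro u hu v hv
    have hKb : ∀ s ∈ Set.uIoc v u, ‖f' s‖ ≤ K := by
      intro s hs
      have hsI : s ∈ Icc (-1:ℝ) 1 :=
        ⟨le_trans (le_min hv.1 hu.1) (le_of_lt hs.1), le_trans hs.2 (max_le hv.2 hu.2)⟩
      have hd : dist (f' s) (f' (-1)) ≤ T := hbv.dist_le hsI hm1
      rw [Real.dist_eq] at hd
      have habs : |f' s| ≤ |f' (-1)| + |f' s - f' (-1)| := by
        calc |f' s| = |f' (-1) + (f' s - f' (-1))| := by ring_nf
          _ ≤ _ := abs_add_le _ _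
      rw [Real.norm_eq_abs, hK_def]
      linarith
    rw [show f u - f v = ∫ s in v..u, f' s from (ftc v hv u hu).symm]
    have h := intervalIntegral.norm_integral_le_of_norm_le_const (C := K) (f := f')
      (a := v) (b := u) hKb
    simpa [Real.norm_eq_abs, abs_sub_comm] using h
  have hhalf : ∀ y ∈ Ioo (-1:ℝ) 1, ∀ z ∈ Icc (-1:ℝ) 1, y ≠ z →
      |(f y - f z)/(2*(y - z))| ≤ K/2 := by
    intro y hy z hz hne
    rw [abs_div, show |2*(y-z)| = 2 * |y - z| from by rw [abs_mul, abs_two]]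
    have hyz : 0 < |y - z| := abs_pos.mpr (sub_ne_zero.mpr hne)
    rw [div_le_div_iff₀ (by positivity) two_pos]
    have := hquot y (Ioo_subset_Icc_self hy) z hz
    nlinarith
  have hOb : ∀ y ∈ Ioo (-1:ℝ) 1, |Ofun f y| ≤ K := by
    intro y hy
    have h1 := hhalf y hy 1 hp1 (ne_of_lt hy.2)
    have h2 := hhalf y hy (-1) hm1 (ne_of_gt hy.1)
    rw [show y - (-1) = y + 1 from by ring] at h2
    rw [Ofun]
    have h3 := abs_add_le ((f y - f 1)/(2*(y-1))) (-((f y - f (-1))/(2*(y+1))))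
    rw [abs_neg, ← sub_eq_add_neg] at h3
    have hKnn : 0 ≤ K := by
      have := hquot 1 hp1 1 hp1
      simp at this
      nlinarith [abs_nonneg (f' (-1)), hT0]
    linarith
  have hEb : ∀ y ∈ Ioo (-1:ℝ) 1, |Efun f y| ≤ K := by
    intro y hy
    have h1 := hhalf y hy 1 hp1 (ne_of_lt hy.2)
    have h2 := hhalf y hy (-1) hm1 (ne_of_gt hy.1)
    rw [show y - (-1) = y + 1 from by ring] at h2
    rw [Efun]
    have e1 : (f 1 - f y)/(2*(y-1)) = -((f y - f 1)/(2*(y-1))) := by ring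
    have e2 : (f (-1) - f y)/(2*(y+1)) = -((f y - f (-1))/(2*(y+1))) := by ring
    rw [e1, e2]
    have h3 := abs_add_le (-((f y - f 1)/(2*(y-1)))) (-((f y - f (-1))/(2*(y+1))))
    rw [abs_neg, abs_neg] at h3
    linarith
  have hbddO : BddAbove (Set.range fun y : Ioo (-1:ℝ) 1 => |Ofun f (y:ℝ)|) := by
    refine ⟨K, ?_⟩
    rintro z ⟨y, rfl⟩
    exact hOb y y.2
  have hbddE : BddAbove (Set.range fun y : Ioo (-1:ℝ) 1 => |Efun f (y:ℝ)|) := by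
    refine ⟨K, ?_⟩
    rintro z ⟨y, rfl⟩
    exact hEb y y.2
  have hpt : ∀ x ∈ Icc (-1:ℝ) 1, (n:ℝ) * |berrut f n x - f x| ≤ T/2 + M := by
    intro x hx
    by_cases hnd : isNode n x
    · rw [berrut, if_pos hnd, sub_self, abs_zero, mul_zero]
      positivity
    · have hnode : ∀ k ≤ n, x ≠ node n k := by
        intro k hk he; exact hnd ⟨k, hk, he⟩
      have hxm1 : x ≠ -1 := fun h => hnode 0 (Nat.zero_le n) (by rw [h, node_zero])
      have hx1 : x ≠ 1 := fun h => hnode n (le_refl n) (by rw [h, node_last hn])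
      have hxI : x ∈ Ioo (-1:ℝ) 1 :=
        ⟨lt_of_le_of_ne hx.1 (Ne.symm hxm1), lt_of_le_of_ne hx.2 hx1⟩
      set c : ℕ → ℝ := fun k => (f (node n k) - f x) / (x - node n k) with hc_def
      set S : ℝ := ∑ k ∈ Finset.range (n+1), (-1:ℝ)^k * c k with hS_def
      have hND : Nnum f n x - f x * Dden n x = S := by
        rw [Nnum, Dden, hS_def, Finset.mul_sum, ← Finset.sum_sub_distrib]
        apply Finset.sum_congr rfl
        intro k _
        simp only [hc_def]
        ring
      have hDlow := dden_lower hn hxI.1 hxI.2 hnode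
      have hD0 : Dden n x ≠ 0 := by
        intro h; rw [h, abs_zero] at hDlow; linarith
      have hBf : berrut f n x - f x = S / Dden n x := by
        rw [berrut, if_neg hnd, ← hND]
        field_simp
        try ring
      set AP : ℕ → ℝ := fun k => (∫ s in (node n k)..x, P s) / (x - node n k) with hAP_def
      set AQ : ℕ → ℝ := fun k => (∫ s in (node n k)..x, Q s) / (x - node n k) with hAQ_def
      have hcAPQ : ∀ k, k ≤ n → c k = AQ k - AP k := by
        intro k hk
        have hnm := node_mem hn hk
        have hIsub : (∫ s in (node n k)..x, f' s)
            = (∫ s in (node n k)..x, P s) - ∫ s in (node n k)..x, Q s := by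
          rw [intervalIntegral.integral_congr (g := fun s => P s - Q s) (fun s _ => hfPQ s),
            intervalIntegral.integral_sub (monoII hPm hnm hx) (monoII hQm hnm hx)]
        have hftc := ftc (node n k) hnm x hx
        simp only [hc_def, hAP_def, hAQ_def]
        rw [show f (node n k) - f x = -(∫ s in (node n k)..x, f' s) from by rw [hftc]; ring,
          hIsub]
        ring
      have hAPmono : ∀ k, k < n → AP k ≤ AP (k+1) := by
        intro k hk
        exact avg_mono hPm (node_mem hn (le_of_lt hk)) (node_mem hn hk) hx
          (node_lt_node hn (Nat.lt_succ_self k))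
          (fun h => hnode k (le_of_lt hk) h.symm)
          (fun h => hnode (k+1) hk h.symm)
      have hAQmono : ∀ k, k < n → AQ k ≤ AQ (k+1) := by
        intro k hk
        exact avg_mono hQm (node_mem hn (le_of_lt hk)) (node_mem hn hk) hx
          (node_lt_node hn (Nat.lt_succ_self k))
          (fun h => hnode k (le_of_lt hk) h.symm)
          (fun h => hnode (k+1) hk h.symm)
      have hbound0 : ∀ φ : ℝ → ℝ, MonotoneOn φ (Icc (-1:ℝ) 1) →
          φ (-1) ≤ (∫ s in (node n 0)..x, φ s) / (x - node n 0) := by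
        intro φ hφ
        rw [node_zero]
        rw [le_div_iff₀ (by linarith [hxI.1] : (0:ℝ) < x - (-1))]
        exact int_ge_left hφ hm1 hx (by linarith [hxI.1])
      have hboundn : ∀ φ : ℝ → ℝ, MonotoneOn φ (Icc (-1:ℝ) 1) →
          (∫ s in (node n n)..x, φ s) / (x - node n n) ≤ φ 1 := by
        intro φ hφ
        rw [node_last hn]
        have e : (∫ s in (1:ℝ)..x, φ s)/(x - 1) = (∫ s in x..(1:ℝ), φ s)/(1 - x) := by
          rw [intervalIntegral.integral_symm, show x - 1 = -(1-x) from by ring, neg_div_neg_eq]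
        rw [e, div_le_iff₀ (by linarith [hxI.2] : (0:ℝ) < 1 - x)]
        exact int_le_right hφ hx hp1 (le_of_lt hxI.2)
      have hvft1 : vft 1 = T := by
        rw [hvft_def, variationOnFromTo.eq_of_le _ _ (by norm_num : (-1:ℝ) ≤ 1),
          Set.inter_self, hT_def]
      have hvftm1 : vft (-1) = 0 := variationOnFromTo.self _ _ _
      have hPQsum : P 1 - P (-1) + (Q 1 - Q (-1)) = T := by
        simp only [hP_def, hQ_def]
        try dsimp only
        rw [hvft1, hvftm1]
        ring
      have hsum : ∑ k ∈ Finset.range n, |c k - c (k+1)| ≤ T := by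
        have hstep : ∀ k ∈ Finset.range n,
            |c k - c (k+1)| ≤ (AP (k+1) - AP k) + (AQ (k+1) - AQ k) := by
          intro k hk
          have hk' : k < n := Finset.mem_range.mp hk
          have h1 := hAPmono k hk'
          have h2 := hAQmono k hk'
          rw [hcAPQ k (le_of_lt hk'), hcAPQ (k+1) hk']
          apply abs_le.mpr
          constructor <;> linarith
        calc ∑ k ∈ Finset.range n, |c k - c (k+1)|
            ≤ ∑ k ∈ Finset.range n, ((AP (k+1) - AP k) + (AQ (k+1) - AQ k)) :=
              Finset.sum_le_sum hstep
          _ = (AP n - AP 0) + (AQ n - AQ 0) := by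
              rw [Finset.sum_add_distrib, Finset.sum_range_sub, Finset.sum_range_sub]
          _ ≤ T := by
              have h1 := hbound0 P hPm
              have h2 := hbound0 Q hQm
              have h3 := hboundn P hPm
              have h4 := hboundn Q hQm
              simp only [hAP_def, hAQ_def]
              try dsimp only
              linarith
      have hid : 2 * S = c 0 + (-1:ℝ)^n * c n
          + ∑ k ∈ Finset.range n, (-1:ℝ)^k * (c k - c (k+1)) := by
        have h1 : S = (∑ k ∈ Finset.range n, (-1:ℝ)^k * c k) + (-1:ℝ)^n * c n := by
          rw [hS_def, Finset.sum_range_succ]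
        have h2 : S = c 0 - ∑ k ∈ Finset.range n, (-1:ℝ)^k * c (k+1) := by
          rw [hS_def, alt_shift]
        have h3 : ∑ k ∈ Finset.range n, (-1:ℝ)^k * (c k - c (k+1))
            = (∑ k ∈ Finset.range n, (-1:ℝ)^k * c k)
              - ∑ k ∈ Finset.range n, (-1:ℝ)^k * c (k+1) := by
          rw [← Finset.sum_sub_distrib]
          apply Finset.sum_congr rfl
          intro k _
          ring
        linarith
      set β : ℝ := (c 0 + (-1:ℝ)^n * c n)/2 with hβ_def
      have hSb : |S| ≤ |β| + T/2 := by
        have h4 : |∑ k ∈ Finset.range n, (-1:ℝ)^k * (c k - c (k+1))|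
            ≤ ∑ k ∈ Finset.range n, |c k - c (k+1)| := by
          refine le_trans (Finset.abs_sum_le_sum_abs _ _) (le_of_eq ?_)
          apply Finset.sum_congr rfl
          intro k _
          rw [abs_mul, abs_pow, abs_neg, abs_one, one_pow, one_mul]
        have h5 : S = β + (∑ k ∈ Finset.range n, (-1:ℝ)^k * (c k - c (k+1)))/2 := by
          rw [hβ_def]; linarith
        have h6 : |(∑ k ∈ Finset.range n, (-1:ℝ)^k * (c k - c (k+1)))/2|
            = |∑ k ∈ Finset.range n, (-1:ℝ)^k * (c k - c (k+1))|/2 := by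
          rw [abs_div, abs_two]
        have h7 := le_trans h4 hsum
        calc |S| = |β + (∑ k ∈ Finset.range n, (-1:ℝ)^k * (c k - c (k+1)))/2| := by rw [h5]
          _ ≤ |β| + |(∑ k ∈ Finset.range n, (-1:ℝ)^k * (c k - c (k+1)))/2| := abs_add_le _ _
          _ = |β| + |∑ k ∈ Finset.range n, (-1:ℝ)^k * (c k - c (k+1))|/2 := by rw [h6]
          _ ≤ |β| + T/2 := by linarith
      have hβM : |β| ≤ M := by
        rcases Nat.even_or_odd n with he | ho
        · have hpow : (-1:ℝ)^n = 1 := he.neg_one_pow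
          have hβE : β = Efun f x := by
            simp only [hβ_def, hc_def, hpow, node_zero, node_last hn, Efun]
            have hxp : x + 1 ≠ 0 := by intro h; apply hxm1; linarith
            have hxm : x - 1 ≠ 0 := by intro h; apply hx1; linarith
            field_simp
            ring
          rw [hβE, hM_def]
          refine le_trans ?_ (le_max_right _ _)
          exact le_ciSup hbddE ⟨x, hxI⟩
        · have hpow : (-1:ℝ)^n = -1 := ho.neg_one_pow
          have hβO : β = Ofun f x := by
            simp only [hβ_def, hc_def, hpow, node_zero, node_last hn, Ofun]
            have hxp : x + 1 ≠ 0 := by intro h; apply hxm1; linarith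
            have hxm : x - 1 ≠ 0 := by intro h; apply hx1; linarith
            field_simp
            ring
          rw [hβO, hM_def]
          refine le_trans ?_ (le_max_left _ _)
          exact le_ciSup hbddO ⟨x, hxI⟩
      rw [hBf, abs_div, show (n:ℝ) * (|S| / |Dden n x|) = |S| * ((n:ℝ)/|Dden n x|) from by ring]
      have hDpos : (0:ℝ) < |Dden n x| := lt_of_lt_of_le hn' hDlow
      have hfrac : (n:ℝ)/|Dden n x| ≤ 1 := by
        rw [div_le_one hDpos]; exact hDlow
      calc |S| * ((n:ℝ)/|Dden n x|) ≤ |S| * 1 :=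
            mul_le_mul_of_nonneg_left hfrac (abs_nonneg S)
        _ = |S| := mul_one _
        _ ≤ |β| + T/2 := hSb
        _ ≤ M + T/2 := by linarith
        _ = T/2 + M := by ring
  have hsup : (⨆ x : Icc (-1:ℝ) 1, |berrut f n (x:ℝ) - f (x:ℝ)|) ≤ (T/2 + M)/n := by
    apply Real.iSup_le
    · intro y
      rw [le_div_iff₀ hn', mul_comm]
      exact hpt y y.2
    · positivity
  calc (n:ℝ) * (⨆ x : Icc (-1:ℝ) 1, |berrut f n (x:ℝ) - f (x:ℝ)|)
      ≤ (n:ℝ) * ((T/2 + M)/n) := mul_le_mul_of_nonneg_left hsup hn'.le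
    _ = T/2 + M := by field_simp
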